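/- Let f(x) = e^x/(1+e^x) and c_k < c_{k+1}. Define P(k) and P(k+1) as the consecutive stick-breaking category probabilities with common positive prefix C. If v < c_k - ln(1 - e^{-(c_{k+1}-c_k)}), then P(k+1) < P(k). -/

import Mathlib

noncomputable def sigmoid (x : ℝ) : ℝ := Real.exp x / (1 + Real.exp x)

/-- Converse direction of the cut-point lemma: below the threshold, category `k`
is strictly more likely than category `k+1`. -/
theorem stmt_18 (ck ckk v C : ℝ) (hc : ck < ckk) (hC : 0 < C)
    (hv : v < ck - Real.log (1 - Real.exp (-(ckk - ck)))) :
    C * ((1 - sigmoid (ck - v)) * sigmoid (ckk - v)) < C * sigmoid (ck - v) := by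
  set a := ck - v with ha
  set b := ckk - v with hb
  have hpos : (0:ℝ) < 1 - Real.exp (-(ckk - ck)) := by
    have : Real.exp (-(ckk - ck)) < 1 := by
      rw [Real.exp_lt_one_iff]; linarith
    linarith
  have h1 : Real.log (1 - Real.exp (-(ckk - ck))) < a := by
    simp only [ha]; linarith
  have h2 : 1 - Real.exp (-(ckk - ck)) < Real.exp a := by
    calc 1 - Real.exp (-(ckk - ck)) = Real.exp (Real.log (1 - Real.exp (-(ckk - ck)))) := (Real.exp_log hpos).symm
    _ < Real.exp a := Real.exp_lt_exp.2 h1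
  have hab : -(ckk - ck) = a - b := by rw [ha, hb]; ring
  have h3 : Real.exp (a - b) = Real.exp a / Real.exp b := Real.exp_sub a b
  have hea : 0 < Real.exp a := Real.exp_pos a
  have heb : 0 < Real.exp b := Real.exp_pos b
  have key : Real.exp b < Real.exp a + Real.exp a * Real.exp b := by
    rw [hab, h3] at h2
    have h4 := mul_lt_mul_of_pos_right h2 heb
    rw [sub_mul, one_mul, div_mul_cancel₀ _ (ne_of_gt heb)] at h4
    linarith
  apply mul_lt_mul_of_pos_left _ hC
  unfold sigmoid
  have h1a : (0:ℝ) < 1 + Real.exp a := by positivity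
  have h1b : (0:ℝ) < 1 + Real.exp b := by positivity
  rw [show (1:ℝ) - Real.exp a / (1 + Real.exp a) = 1 / (1 + Real.exp a) by field_simp; ring]
  rw [div_mul_div_comm, div_lt_div_iff₀ (by positivity) h1a]
  nlinarith
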